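/- arXiv:2605.26631 — 4 statements merged into one kernel-verified Lean document; each statement's English description precedes it below -/
import Mathlib

section
/- Let e_1, ..., e_p be nonnegative random variables and H_0 ⊆ {1,...,p} a set of 'null' indices such that the sum over j ∈ H_0 of E[e_j] is at most p. Let S ⊆ {1,...,p} be a (possibly random) selection set and q > 0 a level such that almost surely every selected index j ∈ S satisfies e_j ≥ p/(q·|S|) whenever S is nonempty (e-BH self-consistency). Then the false discovery rate E[|S ∩ H_0| / max(|S|, 1)] is at most q. -/
open MeasureTheory

/-- FDR control for any self-consistent e-BH-type selection rule:
if the e-values are nonnegative with `∑_{j ∈ H0} E[e_j] ≤ p`, and almost surely every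
selected index `j ∈ S` satisfies `e_j ≥ p / (q * |S|)`, then the FDR
`E[|S ∩ H0| / max(|S|, 1)]` is at most `q`. -/
theorem ebh_self_consistent_fdr_control
    {Ω : Type*} [MeasurableSpace Ω] (μ : Measure Ω) [IsProbabilityMeasure μ]
    (p : ℕ) (hp : 1 ≤ p)
    (e : Fin p → Ω → ℝ)
    (he_nonneg : ∀ j ω, 0 ≤ e j ω)
    (he_int : ∀ j, Integrable (e j) μ)
    (H0 : Finset (Fin p))
    (hsum : ∑ j ∈ H0, ∫ ω, e j ω ∂μ ≤ (p : ℝ))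
    (S : Ω → Finset (Fin p))
    (q : ℝ) (hq : 0 < q)
    (hsc : ∀ᵐ ω ∂μ, ∀ j ∈ S ω, (p : ℝ) / (q * (S ω).card) ≤ e j ω)
    (hFDP : Integrable (fun ω => ((S ω ∩ H0).card : ℝ) / max ((S ω).card : ℝ) 1) μ) :
    ∫ ω, ((S ω ∩ H0).card : ℝ) / max ((S ω).card : ℝ) 1 ∂μ ≤ q := by
  have hp' : (0 : ℝ) < p := by exact_mod_cast hp
  have hg_int : Integrable (fun ω => (q / p) * ∑ j ∈ H0, e j ω) μ :=
    ((integrable_finset_sum H0 (fun j _ => he_int j)).const_mul _)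
  have hle : ∀ᵐ ω ∂μ, ((S ω ∩ H0).card : ℝ) / max ((S ω).card : ℝ) 1
      ≤ (q / p) * ∑ j ∈ H0, e j ω := by
    filter_upwards [hsc] with ω hω
    rcases eq_or_ne (S ω) ∅ with hS | hS
    · simp only [hS, Finset.empty_inter, Finset.card_empty, Nat.cast_zero, zero_div]
      exact mul_nonneg (div_nonneg hq.le hp'.le) (Finset.sum_nonneg fun j _ => he_nonneg j ω)
    · have hcard : (1 : ℝ) ≤ (S ω).card := by
        exact_mod_cast Finset.one_le_card.mpr (Finset.nonempty_of_ne_empty hS)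
      have hcpos : (0 : ℝ) < (S ω).card := lt_of_lt_of_le one_pos hcard
      rw [max_eq_left hcard]
      have key : ((S ω ∩ H0).card : ℝ) * ((p : ℝ) / (q * (S ω).card))
          ≤ ∑ j ∈ H0, e j ω := by
        calc ((S ω ∩ H0).card : ℝ) * ((p : ℝ) / (q * (S ω).card))
            = ∑ j ∈ S ω ∩ H0, (p : ℝ) / (q * (S ω).card) := by
              rw [Finset.sum_const, nsmul_eq_mul]
          _ ≤ ∑ j ∈ S ω ∩ H0, e j ω := by
              refine Finset.sum_le_sum fun j hj => hω j (Finset.mem_inter.mp hj).1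
          _ ≤ ∑ j ∈ H0, e j ω := by
              refine Finset.sum_le_sum_of_subset_of_nonneg Finset.inter_subset_right
                fun j _ _ => he_nonneg j ω
      have hqc : 0 < q * ((S ω).card : ℝ) := mul_pos hq hcpos
      rw [div_le_iff₀ hcpos]
      calc ((S ω ∩ H0).card : ℝ)
          = (q / p) * (((S ω ∩ H0).card : ℝ) * ((p : ℝ) / (q * (S ω).card))) * (S ω).card := by
            field_simp
        _ ≤ (q / p) * (∑ j ∈ H0, e j ω) * (S ω).card := by
            gcongr
  calc ∫ ω, ((S ω ∩ H0).card : ℝ) / max ((S ω).card : ℝ) 1 ∂μ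
      ≤ ∫ ω, (q / p) * ∑ j ∈ H0, e j ω ∂μ := integral_mono_ae hFDP hg_int hle
    _ = (q / p) * ∑ j ∈ H0, ∫ ω, e j ω ∂μ := by
        rw [integral_const_mul, integral_finset_sum H0 fun j _ => he_int j]
    _ ≤ (q / p) * p :=
        mul_le_mul_of_nonneg_left hsum (div_nonneg hq.le hp'.le)
    _ = q := by field_simp
end

section
/- Let e_1, ..., e_p be nonnegative random variables with ∑_{j ∈ H_0} E[e_j] ≤ p for a null set H_0 ⊆ {1,...,p}. For fixed q ∈ (0,1] and s_max ∈ {1,...,p}, let S* be the size-constrained e-BH selection: S* consists of the ĵ* indices with largest e-values, where ĵ* is the largest j ≤ s_max with e_(j) ≥ p/(q·j) (and S* = ∅ if no such j exists). Then |S*| ≤ s_max and the FDR E[|S* ∩ H_0|/max(|S*|,1)] ≤ q. -/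
open MeasureTheory
open scoped Classical

/-- Size-constrained e-BH rejection count: the largest `j ≤ s_max` with
`E j ≥ p/(q·j)` (`0` if none exists), where `E j` is the `j`-th largest e-value. -/
noncomputable def ebhCountCap (p smax : ℕ) (E : ℕ → ℝ) (q : ℝ) : ℕ :=
  ((Finset.Icc 1 (min smax p)).filter (fun j => (p : ℝ) / (q * j) ≤ E j)).sup id

/-- The (random) size-constrained e-BH selection: for each outcome `ω`, the indices
carrying the `ĵ*` largest e-values, where `r ω` ranks the indices by decreasing
e-value (with a fixed tie-breaking rule). -/
noncomputable def ebhSelCap {Ω : Type*} (p smax : ℕ) (e : Fin p → Ω → ℝ) (q : ℝ)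
    (r : Ω → ℕ → Fin p) (ω : Ω) : Finset (Fin p) :=
  (Finset.range (ebhCountCap p smax (fun j => e (r ω (j - 1)) ω) q)).image (r ω)

lemma ebhCountCap_le (p smax : ℕ) (E : ℕ → ℝ) (q : ℝ) :
    ebhCountCap p smax E q ≤ min smax p := by
  refine Finset.sup_le fun j hj => ?_
  exact (Finset.mem_Icc.mp (Finset.mem_filter.mp hj).1).2

lemma ebhCountCap_spec (p smax : ℕ) (E : ℕ → ℝ) (q : ℝ)
    (h : ebhCountCap p smax E q ≠ 0) :
    (p : ℝ) / (q * (ebhCountCap p smax E q)) ≤ E (ebhCountCap p smax E q) := by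
  set s := ((Finset.Icc 1 (min smax p)).filter (fun j => (p : ℝ) / (q * j) ≤ E j)) with hs
  have hne : s.Nonempty := by
    by_contra hc
    rw [Finset.not_nonempty_iff_eq_empty] at hc
    apply h
    simp [ebhCountCap, ← hs, hc]
  obtain ⟨b, hb, hbeq⟩ := Finset.exists_mem_eq_sup s hne id
  have : ebhCountCap p smax E q = b := hbeq
  rw [this]
  exact (Finset.mem_filter.mp hb).2

/-- Size-constrained e-BH controls FDR: if the e-values are nonnegative with
`∑_{j ∈ H0} E[e_j] ≤ p`, then the size-constrained e-BH selection `S*` at level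
`q ∈ (0,1]` with cap `s_max` satisfies `|S*| ≤ s_max` and
`FDR = E[|S* ∩ H0| / max(|S*|,1)] ≤ q`. -/
theorem size_constrained_ebh_fdr_control
    {Ω : Type*} [MeasurableSpace Ω] (μ : Measure Ω) [IsProbabilityMeasure μ]
    (p : ℕ) (hp : 1 ≤ p)
    (e : Fin p → Ω → ℝ)
    (he_nonneg : ∀ j ω, 0 ≤ e j ω)
    (he_int : ∀ j, Integrable (e j) μ)
    (H0 : Finset (Fin p))
    (hsum : ∑ j ∈ H0, ∫ ω, e j ω ∂μ ≤ (p : ℝ))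
    (q : ℝ) (hq : q ∈ Set.Ioc (0 : ℝ) 1)
    (smax : ℕ) (hs1 : 1 ≤ smax) (hsp : smax ≤ p)
    (r : Ω → ℕ → Fin p)
    (hrinj : ∀ ω i j, i < p → j < p → r ω i = r ω j → i = j)
    (hsort : ∀ ω i j, i ≤ j → j < p → e (r ω j) ω ≤ e (r ω i) ω)
    (hFDP : Integrable (fun ω =>
      ((ebhSelCap p smax e q r ω ∩ H0).card : ℝ) /
        max ((ebhSelCap p smax e q r ω).card : ℝ) 1) μ) :
    (∀ ω, (ebhSelCap p smax e q r ω).card ≤ smax) ∧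
      ∫ ω, ((ebhSelCap p smax e q r ω ∩ H0).card : ℝ) /
          max ((ebhSelCap p smax e q r ω).card : ℝ) 1 ∂μ ≤ q := by
  obtain ⟨hq0, hq1⟩ := hq
  have hp0 : (0:ℝ) < p := by exact_mod_cast hp
  set k : Ω → ℕ := fun ω => ebhCountCap p smax (fun j => e (r ω (j - 1)) ω) q with hkdef
  have hkle : ∀ ω, k ω ≤ min smax p := fun ω => ebhCountCap_le _ _ _ _
  have hklep : ∀ ω, k ω ≤ p := fun ω => (hkle ω).trans (min_le_right _ _)
  have hcard : ∀ ω, (ebhSelCap p smax e q r ω).card = k ω := by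
    intro ω
    rw [ebhSelCap, Finset.card_image_of_injOn, Finset.card_range]
    intro i hi j hj hij
    simp only [Finset.coe_range, Set.mem_Iio] at hi hj
    exact hrinj ω i j (lt_of_lt_of_le hi (hklep ω)) (lt_of_lt_of_le hj (hklep ω)) hij
  have hcardle : ∀ ω, (ebhSelCap p smax e q r ω).card ≤ smax := by
    intro ω; rw [hcard ω]; exact (hkle ω).trans (min_le_left _ _)
  refine ⟨hcardle, ?_⟩
  -- pointwise bound
  have key : ∀ ω, ((ebhSelCap p smax e q r ω ∩ H0).card : ℝ) /
      max ((ebhSelCap p smax e q r ω).card : ℝ) 1 ≤ ∑ j ∈ H0, (q / p) * e j ω := by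
    intro ω
    have hrhs_nonneg : (0:ℝ) ≤ ∑ j ∈ H0, (q / p) * e j ω :=
      Finset.sum_nonneg fun j _ => mul_nonneg (div_nonneg hq0.le hp0.le) (he_nonneg j ω)
    by_cases hk0 : k ω = 0
    · have : ebhSelCap p smax e q r ω = ∅ := by
        apply Finset.card_eq_zero.mp; rw [hcard ω, hk0]
      simp [this, hrhs_nonneg]
    · have hm1 : 1 ≤ k ω := Nat.one_le_iff_ne_zero.mpr hk0
      have hm0 : (0:ℝ) < k ω := by exact_mod_cast hm1
      have hspec := ebhCountCap_spec p smax (fun j => e (r ω (j - 1)) ω) q hk0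
      -- for each selected j, 1/(k ω) ≤ (q/p) e j ω
      have hsel : ∀ j ∈ ebhSelCap p smax e q r ω, (1:ℝ) / k ω ≤ (q / p) * e j ω := by
        intro j hj
        rw [ebhSelCap, Finset.mem_image] at hj
        obtain ⟨i, hi, rfl⟩ := hj
        rw [Finset.mem_range] at hi
        have hle1 : e (r ω (k ω - 1)) ω ≤ e (r ω i) ω :=
          hsort ω i (k ω - 1) (Nat.le_sub_one_of_lt hi)
            (lt_of_lt_of_le (Nat.sub_lt hm1 Nat.one_pos) (hklep ω))
        have hle2 : (p:ℝ) / (q * k ω) ≤ e (r ω i) ω := le_trans hspec hle1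
        have hmul := mul_le_mul_of_nonneg_left hle2 (div_nonneg hq0.le hp0.le)
        have heq : (q / p) * ((p:ℝ) / (q * k ω)) = 1 / k ω := by
          field_simp
        linarith [hmul, heq ▸ hmul]
      calc ((ebhSelCap p smax e q r ω ∩ H0).card : ℝ) /
            max ((ebhSelCap p smax e q r ω).card : ℝ) 1
          = ∑ j ∈ ebhSelCap p smax e q r ω ∩ H0, (1:ℝ) / k ω := by
            rw [hcard ω, max_eq_left (by exact_mod_cast hm1 : (1:ℝ) ≤ (k ω : ℝ))]
            rw [Finset.sum_const, nsmul_eq_mul]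
            ring
        _ ≤ ∑ j ∈ ebhSelCap p smax e q r ω ∩ H0, (q / p) * e j ω :=
            Finset.sum_le_sum fun j hj => hsel j (Finset.mem_inter.mp hj).1
        _ ≤ ∑ j ∈ H0, (q / p) * e j ω := by
            apply Finset.sum_le_sum_of_subset_of_nonneg Finset.inter_subset_right
            intro j _ _
            exact mul_nonneg (div_nonneg hq0.le hp0.le) (he_nonneg j ω)
  have hint : Integrable (fun ω => ∑ j ∈ H0, (q / p) * e j ω) μ :=
    integrable_finset_sum _ fun j _ => (he_int j).const_mul _
  calc ∫ ω, ((ebhSelCap p smax e q r ω ∩ H0).card : ℝ) /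
        max ((ebhSelCap p smax e q r ω).card : ℝ) 1 ∂μ
      ≤ ∫ ω, ∑ j ∈ H0, (q / p) * e j ω ∂μ := integral_mono hFDP hint key
    _ = ∑ j ∈ H0, (q / p) * ∫ ω, e j ω ∂μ := by
        rw [integral_finset_sum _ fun j _ => (he_int j).const_mul _]
        exact Finset.sum_congr rfl fun j _ => MeasureTheory.integral_const_mul _ _
    _ = (q / p) * ∑ j ∈ H0, ∫ ω, e j ω ∂μ := by rw [Finset.mul_sum]
    _ ≤ (q / p) * p := mul_le_mul_of_nonneg_left hsum (div_nonneg hq0.le hp0.le)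
    _ = q := div_mul_cancel₀ q hp0.ne'
end

section
/- In the equicorrelated Gaussian knockoff construction with correlation matrix Σ having ones on the diagonal and minimum eigenvalue λ_min, setting d_j = s for all j with s = min(1, 2λ_min) makes the joint matrix G = [[Σ, Σ − sI], [Σ − sI, Σ]] positive semidefinite. -/
open Matrix

/-- Equicorrelated Gaussian knockoffs: if `Σ` is symmetric positive definite with
unit diagonal and `λ_min > 0` satisfies `λ_min ‖x‖² ≤ xᵀ Σ x` for all `x`
(a minimum-eigenvalue bound), then with `s = min(1, 2 λ_min)` the joint matrix
`G = [[Σ, Σ − sI], [Σ − sI, Σ]]` is positive semidefinite. -/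
theorem equicorrelated_knockoff_psd
    (p : ℕ) (Sig : Matrix (Fin p) (Fin p) ℝ) (hSig : Sig.PosDef)
    (hdiag : ∀ i, Sig i i = 1)
    (lam : ℝ) (hlam : 0 < lam)
    (hmin : ∀ x : Fin p → ℝ, lam * (x ⬝ᵥ x) ≤ x ⬝ᵥ Sig.mulVec x) :
    (Matrix.fromBlocks Sig (Sig - (min 1 (2 * lam)) • (1 : Matrix (Fin p) (Fin p) ℝ))
        (Sig - (min 1 (2 * lam)) • (1 : Matrix (Fin p) (Fin p) ℝ)) Sig).PosSemidef := by
  set s : ℝ := min 1 (2 * lam) with hs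
  have hs0 : 0 < s := lt_min one_pos (by linarith)
  have hs2 : s ≤ 2 * lam := min_le_right _ _
  have hsym : Sigᵀ = Sig := hSig.isHermitian
  refine Matrix.PosSemidef.of_dotProduct_mulVec_nonneg ?_ ?_
  · -- Hermitian
    unfold Matrix.IsHermitian
    rw [show (Matrix.fromBlocks Sig (Sig - s • 1) (Sig - s • 1) Sig)ᴴ
        = Matrix.fromBlocks Sigᴴ (Sig - s • 1)ᴴ (Sig - s • 1)ᴴ Sigᴴ from
        Matrix.fromBlocks_conjTranspose _ _ _ _]
    have h1 : Sigᴴ = Sig := hSig.isHermitian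
    have h2 : (Sig - s • 1)ᴴ = Sig - s • 1 := by
      simp [conjTranspose_sub, hsym]
    rw [h1, h2]
  · intro x
    have hx : x = Sum.elim (x ∘ Sum.inl) (x ∘ Sum.inr) := by
      funext i; cases i <;> rfl
    set u := x ∘ Sum.inl
    set v := x ∘ Sum.inr
    rw [hx]
    have hsymm : ∀ a b : Fin p → ℝ, a ⬝ᵥ Sig *ᵥ b = b ⬝ᵥ Sig *ᵥ a := by
      intro a b
      rw [Matrix.dotProduct_mulVec, ← Matrix.mulVec_transpose, hsym,
        dotProduct_comm]
    have key : (Sum.elim u v) ⬝ᵥ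
        (Matrix.fromBlocks Sig (Sig - s • 1) (Sig - s • 1) Sig) *ᵥ (Sum.elim u v)
        = (u + v) ⬝ᵥ Sig *ᵥ (u + v) - (s / 2) * ((u + v) ⬝ᵥ (u + v))
          + (s / 2) * ((u - v) ⬝ᵥ (u - v)) := by
      rw [Matrix.fromBlocks_mulVec, sumElim_dotProduct_sumElim]
      simp only [Matrix.sub_mulVec, Matrix.smul_mulVec, Matrix.one_mulVec,
        Matrix.mulVec_add, Matrix.add_mulVec, dotProduct_add, add_dotProduct,
        dotProduct_sub, sub_dotProduct, dotProduct_smul, smul_eq_mul,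
        Sum.elim_comp_inl, Sum.elim_comp_inr]
      have h1 := hsymm u v
      have h2 : u ⬝ᵥ v = v ⬝ᵥ u := dotProduct_comm u v
      ring_nf
    simp only [star_trivial, RCLike.ofReal_real_eq_id, id]
    rw [key]
    have h1 := hmin (u + v)
    have h2 : (0:ℝ) ≤ (u + v) ⬝ᵥ (u + v) := by
      simpa using dotProduct_self_star_nonneg (u + v)
    have h3 : (0:ℝ) ≤ (u - v) ⬝ᵥ (u - v) := by
      simpa using dotProduct_self_star_nonneg (u - v)
    nlinarith
end

section
/- With K = 1 knockoff run, e-values defined by e_j = p·1{W_j ≥ τ̂}/(1 + m) where m = #{j : W_j ≤ −τ̂}, and e-BH run at level q: the e-BH procedure rejects exactly the set S = {j : W_j ≥ τ̂} whenever |S| ≥ (1+m)/q, and rejects nothing otherwise. In particular, if τ̂ is the knockoff+ threshold at level q (so that (1+m)/|S| ≤ q), the e-BH rejection set equals the knockoff+ selection set S. -/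
open scoped Classical

/-- e-BH rejection count: the largest `j ∈ {1,…,p}` with `E j ≥ p/(q·j)`,
where `E j` is the `j`-th largest e-value; `0` if none exists. -/
noncomputable def ebhCount (p : ℕ) (E : ℕ → ℝ) (q : ℝ) : ℕ :=
  ((Finset.Icc 1 p).filter (fun j => (p : ℝ) / (q * j) ≤ E j)).sup id

/-- e-BH rejection set: the indices attaining the `ebhCount` largest e-values,
with `r` a fixed ranking of the indices by decreasing e-value. -/
noncomputable def ebhSet (p : ℕ) (e : Fin p → ℝ) (r : ℕ → Fin p) (q : ℝ) :
    Finset (Fin p) :=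
  (Finset.range (ebhCount p (fun j => e (r (j - 1))) q)).image r

/-- Single-run ($K = 1$) equivalence of e-BH and the knockoff+ filter: with
e-values `e_j = p·1{W_j ≥ τ̂}/(1 + m)` where `m = #{j : W_j ≤ −τ̂}`, the e-BH
procedure at level `q` rejects exactly `S = {j : W_j ≥ τ̂}` whenever
`|S| ≥ (1 + m)/q`, and rejects nothing otherwise. In particular, when `τ̂` is
the knockoff+ threshold at level `q` (so `(1 + m)/|S| ≤ q`), the e-BH rejection
set equals the knockoff+ selection set. -/
theorem single_run_ebh_eq_knockoff_plus
    (p : ℕ) (hp : 1 ≤ p) (q : ℝ) (hq : q ∈ Set.Ioc (0 : ℝ) 1)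
    (W : Fin p → ℝ) (τ : ℝ) (hτ : 0 < τ)
    (S : Finset (Fin p)) (hS : S = Finset.univ.filter (fun j => τ ≤ W j))
    (m : ℕ) (hm : m = (Finset.univ.filter (fun j : Fin p => W j ≤ -τ)).card)
    (e : Fin p → ℝ)
    (he : e = fun j => if τ ≤ W j then (p : ℝ) / (1 + m) else 0)
    (r : ℕ → Fin p)
    (hrinj : ∀ i j, i < p → j < p → r i = r j → i = j)
    (hfirst : ∀ k, k < S.card → r k ∈ S)
    (hlast : ∀ k, S.card ≤ k → k < p → r k ∉ S) :
    (1 + (m : ℝ) ≤ q * S.card → ebhSet p e r q = S) ∧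
      (¬ (1 + (m : ℝ) ≤ q * S.card) → ebhSet p e r q = ∅) := by
  obtain ⟨hq0, hq1⟩ := hq
  have hp0 : (0:ℝ) < p := by exact_mod_cast hp
  have hm0 : (0:ℝ) < 1 + m := by positivity
  have hnp : S.card ≤ p := by
    rw [hS]
    simpa using (Finset.card_filter_le Finset.univ (fun j : Fin p => τ ≤ W j))
  set n := S.card with hn
  have hmemS : ∀ j : Fin p, j ∈ S ↔ τ ≤ W j := by
    intro j; rw [hS]; simp
  have hEle : ∀ j, 1 ≤ j → j ≤ n → e (r (j-1)) = (p:ℝ)/(1+(m:ℝ)) := by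
    intro j h1 h2
    have hmem : r (j-1) ∈ S := hfirst _ (by omega)
    rw [he]; simp only [if_pos ((hmemS _).mp hmem)]
  have hEgt : ∀ j, n < j → j ≤ p → e (r (j-1)) = 0 := by
    intro j h1 h2
    have hns : r (j-1) ∉ S := hlast _ (by omega) (by omega)
    rw [he]; simp only
    exact if_neg (fun h => hns ((hmemS _).mpr h))
  constructor
  · intro hle
    have hn1 : 1 ≤ n := by
      by_contra h
      have hzero : n = 0 := by omega
      rw [hzero] at hle; push_cast at hle; nlinarith
    have hcount : ebhCount p (fun j => e (r (j-1))) q = n := by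
      unfold ebhCount
      apply le_antisymm
      · apply Finset.sup_le
        intro j hj
        simp only [Finset.mem_filter, Finset.mem_Icc] at hj
        obtain ⟨⟨hj1, hjp⟩, hcond⟩ := hj
        by_contra hjn
        simp only [id] at hjn
        push_neg at hjn
        rw [hEgt j (by omega) hjp] at hcond
        have hjpos : (0:ℝ) < j := by exact_mod_cast (show 0 < j by omega)
        have : (0:ℝ) < (p:ℝ)/(q*j) := div_pos hp0 (mul_pos hq0 hjpos)
        linarith
      · have hmem : n ∈ (Finset.Icc 1 p).filter
            (fun j => (p : ℝ) / (q * j) ≤ e (r (j-1))) := by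
          simp only [Finset.mem_filter, Finset.mem_Icc]
          refine ⟨⟨hn1, hnp⟩, ?_⟩
          rw [hEle n hn1 le_rfl]
          gcongr
        exact Finset.le_sup (f := id) hmem
    unfold ebhSet
    rw [hcount]
    have hsub : (Finset.range n).image r ⊆ S := by
      intro x hx
      obtain ⟨k, hk, rfl⟩ := Finset.mem_image.mp hx
      exact hfirst k (Finset.mem_range.mp hk)
    have hcard : ((Finset.range n).image r).card = n := by
      rw [Finset.card_image_of_injOn, Finset.card_range]
      intro i hi j hj hij
      exact hrinj i j (by simp at hi; omega) (by simp at hj; omega) hij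
    exact Finset.eq_of_subset_of_card_le hsub (by omega)
  · intro hnle
    have hcount : ebhCount p (fun j => e (r (j-1))) q = 0 := by
      unfold ebhCount
      refine Nat.le_zero.mp (Finset.sup_le ?_)
      intro j hj
      simp only [Finset.mem_filter, Finset.mem_Icc] at hj
      obtain ⟨⟨hj1, hjp⟩, hcond⟩ := hj
      exfalso
      have hjpos : (0:ℝ) < j := by exact_mod_cast (show 0 < j by omega)
      by_cases hjn : j ≤ n
      · rw [hEle j hj1 hjn] at hcond
        rw [div_le_div_iff₀ (mul_pos hq0 hjpos) hm0] at hcond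
        have h1 : 1 + (m:ℝ) ≤ q * j :=
          le_of_mul_le_mul_left (by linarith [hcond]) hp0
        have h2 : (j:ℝ) ≤ n := by exact_mod_cast hjn
        have : q * j ≤ q * n := by nlinarith
        exact hnle (by linarith)
      · rw [hEgt j (by omega) hjp] at hcond
        have : (0:ℝ) < (p:ℝ)/(q*j) := div_pos hp0 (mul_pos hq0 hjpos)
        linarith
    unfold ebhSet
    rw [hcount]
    simp
end
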